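/- Let H be a complex Hilbert space and T a self-adjoint bounded linear operator on H. Let λ ∈ ℝ and δ > 0 be such that the spectrum of T intersects the closed disc {z ∈ ℂ : |z − λ| ≤ δ} only in the set {λ}. Then (2πi)⁻¹ times the counterclockwise circle integral over the circle |z − λ| = δ of the resolvent (z·1 − T)⁻¹ equals the orthogonal projection of H onto the eigenspace ker(T − λ·1). -/

import Mathlib

open scoped Real
open Complex Metric MeasureTheory

/-- The orthogonal projection of `H` onto the eigenspace `ker (T - λ·1)`,
viewed as a bounded operator on `H`. -/
noncomputable def eigenProjection {H : Type*} [NormedAddCommGroup H] [InnerProductSpace ℂ H]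
    [CompleteSpace H] (T : H →L[ℂ] H) (μ : ℂ) : H →L[ℂ] H :=
  (LinearMap.ker ((T - μ • (1 : H →L[ℂ] H) : H →L[ℂ] H) : H →ₗ[ℂ] H)).subtypeL.comp
    (Submodule.orthogonalProjectionOnto
      (LinearMap.ker ((T - μ • (1 : H →L[ℂ] H) : H →L[ℂ] H) : H →ₗ[ℂ] H)))

set_option maxHeartbeats 2000000 in
/-- **Riesz projection formula.** If the spectrum of a self-adjoint bounded operator `T` meets
the closed disc of radius `δ` around `λ` only in `{λ}`, then `(2πi)⁻¹` times the circle
integral of the resolvent over the circle `|z - λ| = δ` is the orthogonal projection onto the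
eigenspace `ker (T - λ·1)`. -/
theorem riesz_projection_eq_orthogonalProjection
    {H : Type*} [NormedAddCommGroup H] [InnerProductSpace ℂ H] [CompleteSpace H]
    (T : H →L[ℂ] H) (hT : IsSelfAdjoint T) (l : ℝ) (δ : ℝ) (hδ : 0 < δ)
    (hspec : spectrum ℂ T ∩ Metric.closedBall (l : ℂ) δ ⊆ {(l : ℂ)}) :
    (2 * π * Complex.I)⁻¹ • (∮ z in C((l : ℂ), δ), resolvent T z)
      = eigenProjection T (l : ℂ) := by
  classical
  have hTn : IsStarNormal T := hT.isStarNormal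
  haveI : CompactSpace (spectrum ℂ T) := isCompact_iff_compactSpace.mp (spectrum.isCompact T)
  -- points of the spectrum other than l are far from l
  have hfar : ∀ x : spectrum ℂ T, (x : ℂ) ≠ (l : ℂ) → δ < dist (x : ℂ) (l : ℂ) := by
    intro x hx
    by_contra h
    push_neg at h
    exact hx (hspec ⟨x.2, Metric.mem_closedBall.mpr h⟩)
  -- circle points avoid the spectrum
  have hcirc : ∀ (θ : ℝ) (x : spectrum ℂ T), circleMap (l : ℂ) δ θ - (x : ℂ) ≠ 0 := by
    intro θ x h
    rw [sub_eq_zero] at h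
    have hd : dist (circleMap (l : ℂ) δ θ) (l : ℂ) = δ :=
      mem_sphere.mp (circleMap_mem_sphere (l : ℂ) hδ.le θ)
    by_cases hx : (x : ℂ) = (l : ℂ)
    · rw [h, hx] at hd
      simp at hd; exact hδ.ne' hd.symm
    · have := hfar x hx
      rw [← h, hd] at this
      exact lt_irrefl _ this
  -- the resolvent kernel as a jointly-continuous function
  have hFc : Continuous fun p : ℝ × spectrum ℂ T =>
      (circleMap 0 δ p.1 * Complex.I) * (circleMap (l : ℂ) δ p.1 - (p.2 : ℂ))⁻¹ := by
    refine Continuous.mul (((continuous_circleMap 0 δ).comp continuous_fst).mul continuous_const) ?_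
    exact (((continuous_circleMap (l : ℂ) δ).comp continuous_fst).sub
      (continuous_subtype_val.comp continuous_snd)).inv₀ fun p => hcirc p.1 p.2
  set F : C(ℝ × spectrum ℂ T, ℂ) := ⟨_, hFc⟩ with hF
  set Φ : C(ℝ, C(spectrum ℂ T, ℂ)) := F.curry with hΦ
  set π₀ := cfcHom hTn (R := ℂ) with hπ₀
  set L : C(spectrum ℂ T, ℂ) →L[ℂ] (H →L[ℂ] H) :=
    { toLinearMap := π₀.toAlgHom.toLinearMap
      cont := (cfcHom_isClosedEmbedding hTn).continuous } with hL
  have hLapp : ∀ f, L f = π₀ f := fun _ => rfl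
  have hcont : ∀ θ : ℝ, Continuous fun x : spectrum ℂ T => (circleMap (l : ℂ) δ θ - (x : ℂ))⁻¹ :=
    fun θ => (continuous_const.sub continuous_subtype_val).inv₀ (hcirc θ)
  have hid : π₀ ((ContinuousMap.id ℂ).restrict (spectrum ℂ T)) = T := cfcHom_id hTn
  have halg : ∀ c : ℂ, π₀ (algebraMap ℂ C(spectrum ℂ T, ℂ) c) = c • (1 : H →L[ℂ] H) := by
    intro c
    rw [hπ₀, AlgHomClass.commutes, Algebra.algebraMap_eq_smul_one]
  -- the resolvent on the circle via the continuous functional calculus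
  have hres : ∀ θ : ℝ, resolvent T (circleMap (l : ℂ) δ θ)
      = π₀ ⟨fun x => (circleMap (l : ℂ) δ θ - (x : ℂ))⁻¹, hcont θ⟩ := by
    intro θ
    set z := circleMap (l : ℂ) δ θ with hz
    set f : C(spectrum ℂ T, ℂ) := ⟨fun x => (z - (x : ℂ))⁻¹, hcont θ⟩ with hf
    set u : C(spectrum ℂ T, ℂ) :=
      algebraMap ℂ C(spectrum ℂ T, ℂ) z - (ContinuousMap.id ℂ).restrict (spectrum ℂ T) with hu
    have huf : u * f = 1 := by
      ext x
      simp only [hu, hf, ContinuousMap.mul_apply, ContinuousMap.sub_apply,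
        ContinuousMap.restrict_apply, ContinuousMap.id_apply,
        ContinuousMap.coe_mk, ContinuousMap.one_apply]
      have : ((algebraMap ℂ C(spectrum ℂ T, ℂ)) z) x = z := rfl
      rw [this, mul_inv_cancel₀ (hcirc θ x)]
    have hfu : f * u = 1 := by rw [mul_comm] at huf; exact huf
    have hval : π₀ u = algebraMap ℂ (H →L[ℂ] H) z - T := by
      rw [hu, map_sub, hid, hπ₀, AlgHomClass.commutes]
    set U : (H →L[ℂ] H)ˣ :=
      { val := algebraMap ℂ (H →L[ℂ] H) z - T
        inv := π₀ f
        val_inv := by rw [← hval, ← map_mul, huf, map_one]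
        inv_val := by rw [← hval, ← map_mul, hfu, map_one] } with hU
    have : resolvent T z = Ring.inverse (U : H →L[ℂ] H) := rfl
    rw [this, Ring.inverse_unit]
    rfl
  -- Step 1: express the circle integral through the functional calculus
  have hΦint : IntervalIntegrable Φ volume 0 (2 * π) := Φ.continuous.intervalIntegrable 0 (2 * π)
  have key1 : (∮ z in C((l : ℂ), δ), resolvent T z) = L (∫ θ in (0:ℝ)..(2 * π), Φ θ) := by
    rw [← ContinuousLinearMap.intervalIntegral_comp_comm L hΦint]
    unfold circleIntegral
    refine intervalIntegral.integral_congr fun θ _ => ?_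
    show deriv (circleMap (l : ℂ) δ) θ • resolvent T (circleMap (l : ℂ) δ θ) = L (Φ θ)
    rw [deriv_circleMap, hres θ, hLapp]
    have hsm : Φ θ = (circleMap 0 δ θ * Complex.I) •
        (⟨fun x => (circleMap (l : ℂ) δ θ - (x : ℂ))⁻¹, hcont θ⟩ : C(spectrum ℂ T, ℂ)) := by
      ext x
      simp only [hΦ, hF, ContinuousMap.curry_apply, ContinuousMap.coe_mk,
        ContinuousMap.smul_apply, smul_eq_mul]
    rw [hsm, _root_.map_smul]
  -- the indicator function of {l} on the spectrum
  have hUopen : IsOpen {x : spectrum ℂ T | (x : ℂ) = (l : ℂ)} := by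
    have : {x : spectrum ℂ T | (x : ℂ) = (l : ℂ)}
        = (Subtype.val) ⁻¹' (Metric.ball (l : ℂ) δ) := by
      ext x
      simp only [Set.mem_setOf_eq, Set.mem_preimage, Metric.mem_ball]
      constructor
      · intro hx; rw [hx]; simpa using hδ
      · intro hx
        by_contra hne
        exact absurd hx (not_lt.mpr (hfar x hne).le)
    rw [this]
    exact (Metric.isOpen_ball).preimage continuous_subtype_val
  have hUcopen : IsOpen {x : spectrum ℂ T | (x : ℂ) ≠ (l : ℂ)} := by
    have : {x : spectrum ℂ T | (x : ℂ) ≠ (l : ℂ)}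
        = (Subtype.val ⁻¹' ({(l : ℂ)} : Set ℂ))ᶜ := by
      ext x; simp [Set.mem_preimage]
    rw [this]
    exact (isClosed_singleton.preimage continuous_subtype_val).isOpen_compl
  have hg : Continuous fun x : spectrum ℂ T => if (x : ℂ) = (l : ℂ) then (1:ℂ) else 0 := by
    rw [continuous_iff_continuousAt]
    intro x
    by_cases hx : (x : ℂ) = (l : ℂ)
    · exact continuousAt_const.congr <| Filter.eventuallyEq_of_mem (hUopen.mem_nhds hx)
        fun y hy => (if_pos hy).symm
    · exact continuousAt_const.congr <| Filter.eventuallyEq_of_mem (hUcopen.mem_nhds hx)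
        fun y hy => (if_neg hy).symm
  set g : C(spectrum ℂ T, ℂ) := ⟨_, hg⟩ with hgdef
  -- Step 2: pointwise evaluation of the circle integral of the kernel
  have hpt : ∀ x : spectrum ℂ T,
      (∮ z in C((l : ℂ), δ), (z - (x : ℂ))⁻¹) = (2 * π * Complex.I) * g x := by
    intro x
    by_cases hx : (x : ℂ) = (l : ℂ)
    · rw [circleIntegral.integral_sub_inv_of_mem_ball (by rw [hx]; simpa using hδ)]
      simp [hgdef, hx]
    · have hout : ∀ z ∈ closedBall (l : ℂ) δ, z - (x : ℂ) ≠ 0 := by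
        intro z hz h
        rw [sub_eq_zero] at h
        have h1 := hfar x hx
        rw [← h] at h1
        exact absurd (Metric.mem_closedBall.mp hz) (not_le.mpr h1)
      have h0 : (∮ z in C((l : ℂ), δ), (z - (x : ℂ))⁻¹) = 0 := by
        refine circleIntegral_eq_zero_of_differentiable_on_off_countable hδ.le
          Set.countable_empty ?_ ?_
        · exact ContinuousOn.inv₀ ((continuous_id.sub continuous_const).continuousOn) hout
        · intro z hz
          exact ((differentiableAt_id.sub_const _).inv
            (hout z (Metric.ball_subset_closedBall hz.1)))
      rw [h0]
      simp [hgdef, hx]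
  have key2 : (∫ θ in (0:ℝ)..(2 * π), Φ θ) = (2 * π * Complex.I) • g := by
    ext x
    have hev := (ContinuousMap.evalCLM ℂ x : C(spectrum ℂ T, ℂ) →L[ℂ] ℂ).intervalIntegral_comp_comm hΦint
    have hev' : (∫ θ in (0:ℝ)..(2 * π), (Φ θ) x) = (∫ θ in (0:ℝ)..(2 * π), Φ θ) x := hev
    rw [← hev']
    have : (∫ θ in (0:ℝ)..(2 * π), (Φ θ) x)
        = (∮ z in C((l : ℂ), δ), (z - (x : ℂ))⁻¹) := by
      unfold circleIntegral
      refine intervalIntegral.integral_congr fun θ _ => ?_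
      show (Φ θ) x = deriv (circleMap (l : ℂ) δ) θ • (circleMap (l : ℂ) δ θ - (x : ℂ))⁻¹
      rw [deriv_circleMap]
      simp only [hΦ, hF, ContinuousMap.curry_apply, ContinuousMap.coe_mk, smul_eq_mul]
    rw [this, hpt x]
    simp [ContinuousMap.smul_apply]
  set Q := π₀ g with hQdef
  have h2πI : (2 * (π : ℂ) * Complex.I) ≠ 0 := by
    simp [Real.pi_ne_zero, Complex.I_ne_zero, Complex.ofReal_ne_zero]
  have main : (2 * π * Complex.I)⁻¹ • (∮ z in C((l : ℂ), δ), resolvent T z) = Q := by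
    rw [key1, ← _root_.map_smul, key2, smul_smul, inv_mul_cancel₀ h2πI, one_smul, hLapp]
  rw [main]
  -- Q is idempotent, self-adjoint, with the right range
  have hg2 : g * g = g := by
    ext x; by_cases hx : (x : ℂ) = (l : ℂ) <;> simp [hgdef, hx]
  have hQ2 : Q * Q = Q := by rw [hQdef, ← map_mul, hg2]
  have hgs : star g = g := by
    ext x; by_cases hx : (x : ℂ) = (l : ℂ) <;> simp [hgdef, hx]
  have hQs : star Q = Q := by rw [hQdef, ← map_star, hgs]
  have hidg : (((ContinuousMap.id ℂ).restrict (spectrum ℂ T))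
      - algebraMap ℂ C(spectrum ℂ T, ℂ) (l : ℂ)) * g = 0 := by
    ext x
    by_cases hx : (x : ℂ) = (l : ℂ) <;> simp [hgdef, hx]
  have hTQ : (T - (l : ℂ) • 1) * Q = 0 := by
    have hfac : T - (l : ℂ) • (1 : H →L[ℂ] H)
        = π₀ (((ContinuousMap.id ℂ).restrict (spectrum ℂ T))
            - algebraMap ℂ C(spectrum ℂ T, ℂ) (l : ℂ)) := by
      rw [map_sub, hid, halg]
    rw [hfac, hQdef, ← map_mul, hidg, map_zero]
  have hQmem : ∀ v : H, Q v ∈ LinearMap.ker ((T - (l : ℂ) • (1 : H →L[ℂ] H) : H →L[ℂ] H) : H →ₗ[ℂ] H) := by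
    intro v
    have h := congrArg (fun S : H →L[ℂ] H => S v) hTQ
    simpa [LinearMap.mem_ker, ContinuousLinearMap.mul_apply] using h
  have hk : Continuous fun x : spectrum ℂ T =>
      if (x : ℂ) = (l : ℂ) then (0:ℂ) else ((x : ℂ) - (l : ℂ))⁻¹ := by
    rw [continuous_iff_continuousAt]
    intro x
    by_cases hx : (x : ℂ) = (l : ℂ)
    · exact continuousAt_const.congr <| Filter.eventuallyEq_of_mem (hUopen.mem_nhds hx)
        fun y hy => (if_pos hy).symm
    · have hca : ContinuousAt (fun y : spectrum ℂ T => ((y : ℂ) - (l : ℂ))⁻¹) x :=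
        ((continuous_subtype_val.sub continuous_const).continuousAt).inv₀ (sub_ne_zero.mpr hx)
      exact hca.congr <| Filter.eventuallyEq_of_mem (hUcopen.mem_nhds hx)
        fun y hy => (if_neg hy).symm
  set k : C(spectrum ℂ T, ℂ) := ⟨_, hk⟩ with hkdef
  have hone : (1 : C(spectrum ℂ T, ℂ)) - g
      = k * (((ContinuousMap.id ℂ).restrict (spectrum ℂ T))
          - algebraMap ℂ C(spectrum ℂ T, ℂ) (l : ℂ)) := by
    ext x
    by_cases hx : (x : ℂ) = (l : ℂ)
    · simp [hgdef, hkdef, hx]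
    · simp only [hgdef, hkdef, ContinuousMap.sub_apply, ContinuousMap.mul_apply,
        ContinuousMap.coe_mk, ContinuousMap.one_apply, ContinuousMap.restrict_apply,
        ContinuousMap.id_apply, if_neg hx]
      have : ((algebraMap ℂ C(spectrum ℂ T, ℂ)) (l : ℂ)) x = (l : ℂ) := rfl
      rw [this, inv_mul_cancel₀ (sub_ne_zero.mpr hx)]
      simp
  have hQfix : ∀ v ∈ LinearMap.ker ((T - (l : ℂ) • (1 : H →L[ℂ] H) : H →L[ℂ] H) : H →ₗ[ℂ] H), Q v = v := by
    intro v hv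
    have hv0 : (T - (l : ℂ) • (1 : H →L[ℂ] H)) v = 0 := hv
    have hfact : (1 : H →L[ℂ] H) - Q = π₀ k * (T - (l : ℂ) • 1) := by
      have h' := congrArg π₀ hone
      rw [map_sub, map_one, map_mul, map_sub, hid, halg] at h'
      rw [hQdef]
      exact h'
    have h1 : ((1 : H →L[ℂ] H) - Q) v = 0 := by
      rw [hfact]
      show π₀ k ((T - (l : ℂ) • 1) v) = 0
      rw [hv0, map_zero]
    have h2 : v - Q v = 0 := by simpa using h1
    exact (sub_eq_zero.mp h2).symm
  -- conclude Q = eigenProjection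
  ext v
  have hwmem : v - (Submodule.orthogonalProjectionOnto (LinearMap.ker ((T - (l : ℂ) • (1 : H →L[ℂ] H) : H →L[ℂ] H) : H →ₗ[ℂ] H)) v : H)
      ∈ (LinearMap.ker ((T - (l : ℂ) • (1 : H →L[ℂ] H) : H →L[ℂ] H) : H →ₗ[ℂ] H))ᗮ :=
    Submodule.sub_starProjection_mem_orthogonal v
  set p := (Submodule.orthogonalProjectionOnto (LinearMap.ker ((T - (l : ℂ) • (1 : H →L[ℂ] H) : H →L[ℂ] H) : H →ₗ[ℂ] H)) v : H) with hp
  set w := v - p with hwdef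
  have hpmem : p ∈ LinearMap.ker ((T - (l : ℂ) • (1 : H →L[ℂ] H) : H →L[ℂ] H) : H →ₗ[ℂ] H) := by
    rw [hp]
    exact Submodule.coe_mem _
  have hQw : Q w = 0 := by
    have hadj : ContinuousLinearMap.adjoint Q = Q := by
      rw [← ContinuousLinearMap.star_eq_adjoint, hQs]
    have hQQw : Q (Q w) = Q w := by
      have := congrArg (fun S : H →L[ℂ] H => S w) hQ2
      simpa [ContinuousLinearMap.mul_apply] using this
    have hinner : (inner ℂ (Q w) (Q w) : ℂ) = 0 := by
      calc (inner ℂ (Q w) (Q w) : ℂ)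
          = inner ℂ (ContinuousLinearMap.adjoint Q w) (Q w) := by rw [hadj]
        _ = inner ℂ w (Q (Q w)) := ContinuousLinearMap.adjoint_inner_left Q (Q w) w
        _ = inner ℂ w (Q w) := by rw [hQQw]
        _ = 0 := (Submodule.mem_orthogonal' _ _).mp hwmem _ (hQmem w)
    exact inner_self_eq_zero.mp hinner
  have hQv : Q v = Q p + Q w := by
    rw [← map_add]
    congr 1
    rw [hwdef]
    abel
  have : eigenProjection T (l : ℂ) v = p := rfl
  rw [this, hQv, hQfix p hpmem, hQw, add_zero]
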